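/- If h and k are independent random variables each with density (2/π)/(x²+1) on (0,∞), then ℓ = h + k has density (8/π²)·(ℓ·arctan(ℓ) + ln(ℓ²+1))/((ℓ²+4)·ℓ) for ℓ > 0. -/

import Mathlib

open Real MeasureTheory ProbabilityTheory
open scoped ENNReal

noncomputable def gden (x : ℝ) : ℝ := (2 / Real.pi) / (x ^ 2 + 1)

noncomputable def fden (x : ℝ) : ℝ≥0∞ := ENNReal.ofReal (if 0 < x then gden x else 0)

lemma fden_meas : Measurable fden := by
  refine Measurable.ennreal_ofReal (Measurable.ite ?_ (by unfold gden; fun_prop) measurable_const)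
  exact measurableSet_Ioi

lemma gden_intOn : IntegrableOn gden (Set.Ioi 0) volume ∧ ∫ x in Set.Ioi (0:ℝ), gden x = 1 := by
  have hcont : ContinuousWithinAt (fun x : ℝ => (2 / Real.pi) * Real.arctan x) (Set.Ici 0) 0 :=
    ((continuous_const.mul Real.continuous_arctan).continuousWithinAt)
  have hderiv : ∀ x ∈ Set.Ioi (0:ℝ),
      HasDerivAt (fun x : ℝ => (2 / Real.pi) * Real.arctan x) (gden x) x := by
    intro x _
    have := (Real.hasDerivAt_arctan x).const_mul (2 / Real.pi)
    refine this.congr_deriv ?_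
    unfold gden; rw [add_comm]; ring
  have hpos : ∀ x ∈ Set.Ioi (0:ℝ), 0 ≤ gden x := by
    intro x _; unfold gden; positivity
  have htend : Filter.Tendsto (fun x : ℝ => (2 / Real.pi) * Real.arctan x) Filter.atTop
      (nhds 1) := by
    have := Real.tendsto_arctan_atTop.mono_right nhdsWithin_le_nhds
    have h2 := this.const_mul (2 / Real.pi)
    convert h2 using 2
    field_simp
  refine ⟨integrableOn_Ioi_deriv_of_nonneg hcont hderiv hpos htend, ?_⟩
  rw [integral_Ioi_of_hasDerivAt_of_nonneg hcont hderiv hpos htend]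
  simp

lemma gden_nonneg (x : ℝ) : 0 ≤ gden x := by unfold gden; positivity

lemma fden_lintegral : ∫⁻ x, fden x = 1 := by
  have heq : fden = (Set.Ioi (0:ℝ)).indicator (fun x => ENNReal.ofReal (gden x)) := by
    funext x
    unfold fden
    by_cases h : 0 < x <;> simp [Set.indicator, h, Set.mem_Ioi]
  rw [heq, lintegral_indicator measurableSet_Ioi]
  rw [← ofReal_integral_eq_lintegral_ofReal gden_intOn.1
    (Filter.Eventually.of_forall fun x => gden_nonneg x)]
  rw [gden_intOn.2]
  simp

lemma gden_cont : Continuous gden := by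
  apply Continuous.div continuous_const (by continuity)
  intro x; positivity

lemma lemA {l : ℝ} (hl : 0 < l) :
    ∫ x in (0:ℝ)..l, gden x * gden (l - x) =
      (8 / Real.pi ^ 2) * (l * Real.arctan l + Real.log (l ^ 2 + 1)) / ((l ^ 2 + 4) * l) := by
  have hπ : Real.pi ≠ 0 := Real.pi_ne_zero
  set c : ℝ := (4 / Real.pi ^ 2) / (l * (l ^ 2 + 4)) with hc
  have hF : ∀ x : ℝ, HasDerivAt (fun x : ℝ =>
      c * (Real.log (1 + x ^ 2) - Real.log (1 + (l - x) ^ 2)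
        + l * (Real.arctan x + Real.arctan (x - l))))
      (gden x * gden (l - x)) x := by
    intro x
    have h1 : (0:ℝ) < 1 + x ^ 2 := by positivity
    have h2 : (0:ℝ) < 1 + (l - x) ^ 2 := by positivity
    have d1 : HasDerivAt (fun x : ℝ => Real.log (1 + x ^ 2)) (2 * x / (1 + x ^ 2)) x := by
      have := (Real.hasDerivAt_log h1.ne').comp x
        ((hasDerivAt_pow 2 x).const_add 1)
      refine this.congr_deriv ?_; ring_nf
    have d2 : HasDerivAt (fun x : ℝ => Real.log (1 + (l - x) ^ 2))
        (-(2 * (l - x)) / (1 + (l - x) ^ 2)) x := by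
      have hin : HasDerivAt (fun x : ℝ => 1 + (l - x) ^ 2) (2 * (l - x) * (-1)) x := by
        have := ((hasDerivAt_id x).const_sub l).pow 2
        refine (this.const_add 1).congr_deriv ?_
        simp
      have := (Real.hasDerivAt_log h2.ne').comp x hin
      refine this.congr_deriv ?_; field_simp
    have d3 : HasDerivAt Real.arctan (1 / (1 + x ^ 2)) x := Real.hasDerivAt_arctan x
    have d4 : HasDerivAt (fun x : ℝ => Real.arctan (x - l)) (1 / (1 + (l - x) ^ 2)) x := by
      have := (Real.hasDerivAt_arctan (x - l)).comp x ((hasDerivAt_id x).sub_const l)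
      refine this.congr_deriv ?_
      rw [mul_one]; ring_nf
    have := (((d1.sub d2).add ((d3.add d4).const_mul l)).const_mul c)
    refine this.congr_deriv ?_
    unfold gden
    rw [hc]
    have h1' : (1 + x ^ 2) ≠ 0 := h1.ne'
    have h2' : (1 + (l - x) ^ 2) ≠ 0 := h2.ne'
    have hl' : l ≠ 0 := hl.ne'
    have h4 : (l ^ 2 + 4 : ℝ) ≠ 0 := by positivity
    field_simp
    ring
  have hcont : IntervalIntegrable (fun x => gden x * gden (l - x)) volume 0 l :=
    (gden_cont.mul (gden_cont.comp (continuous_const.sub continuous_id))).intervalIntegrable 0 l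
  rw [intervalIntegral.integral_eq_sub_of_hasDerivAt (fun x _ => hF x) hcont]
  have h4 : (l ^ 2 + 4 : ℝ) ≠ 0 := by positivity
  have hl' : l ≠ 0 := hl.ne'
  rw [hc]
  norm_num [zero_sub, Real.arctan_neg]
  rw [show (1 + l ^ 2 : ℝ) = l ^ 2 + 1 by ring]
  field_simp
  ring

noncomputable def tden (l : ℝ) : ℝ≥0∞ := ENNReal.ofReal (if 0 < l then
  (8 / Real.pi ^ 2) * (l * Real.arctan l + Real.log (l ^ 2 + 1)) / ((l ^ 2 + 4) * l) else 0)

lemma tden_meas : Measurable tden := by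
  refine Measurable.ennreal_ofReal (Measurable.ite ?_ (by
    have h1 : Measurable Real.arctan := Real.continuous_arctan.measurable
    have h2 : Measurable Real.log := Real.measurable_log
    fun_prop) measurable_const)
  exact measurableSet_Ioi

lemma conv_eq (l : ℝ) : ∫⁻ x, fden x * fden (l - x) = tden l := by
  by_cases hl : 0 < l
  · have hr : ∀ x, fden x * fden (l - x) =
        ENNReal.ofReal ((Set.Ioo (0:ℝ) l).indicator (fun x => gden x * gden (l - x)) x) := by
      intro x; unfold fden
      by_cases hx : 0 < x
      · by_cases hx2 : x < l
        · have h3 : 0 < l - x := by linarith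
          simp [hx, h3, Set.indicator, Set.mem_Ioo, hx2,
            ENNReal.ofReal_mul (gden_nonneg x)]
        · have h3 : ¬ 0 < l - x := by linarith
          simp [hx, h3, Set.indicator, Set.mem_Ioo, hx2]
      · simp [hx, Set.indicator, Set.mem_Ioo]
    simp_rw [hr]
    have hint : Integrable ((Set.Ioo (0:ℝ) l).indicator (fun x => gden x * gden (l - x))) := by
      rw [integrable_indicator_iff measurableSet_Ioo]
      exact ((gden_cont.mul (gden_cont.comp
        (continuous_const.sub continuous_id))).continuousOn.integrableOn_compact
        isCompact_Icc).mono_set Set.Ioo_subset_Icc_self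
    have hnn : 0 ≤ᵐ[volume] (Set.Ioo (0:ℝ) l).indicator (fun x => gden x * gden (l - x)) := by
      refine Filter.Eventually.of_forall fun x => ?_
      exact Set.indicator_nonneg (fun y _ => mul_nonneg (gden_nonneg y) (gden_nonneg _)) x
    rw [← ofReal_integral_eq_lintegral_ofReal hint hnn]
    rw [MeasureTheory.integral_indicator measurableSet_Ioo,
      ← MeasureTheory.integral_Ioc_eq_integral_Ioo,
      ← intervalIntegral.integral_of_le hl.le, lemA hl]
    unfold tden
    rw [if_pos hl]
  · have hz : ∀ x, fden x * fden (l - x) = 0 := by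
      intro x
      by_cases hx : 0 < x
      · have h3 : ¬ 0 < l - x := by push_neg at hl ⊢; linarith
        unfold fden; simp [h3]
      · unfold fden; simp [hx]
    simp_rw [hz]
    unfold tden
    simp [hl]

lemma aemeas_of_pdf {Ω : Type*} [MeasureSpace Ω] (X : Ω → ℝ)
    (h : pdf X ℙ (volume : Measure ℝ) =ᵐ[(volume : Measure ℝ)] fden) : AEMeasurable X ℙ := by
  refine aemeasurable_of_pdf_ne_zero (μ := (volume : Measure ℝ)) X fun h0 => ?_
  have h1 : fden =ᵐ[volume] 0 := h.symm.trans h0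
  have h2 := lintegral_congr_ae h1
  rw [fden_lintegral] at h2
  simp only [Pi.zero_apply, lintegral_zero] at h2
  exact one_ne_zero h2

lemma map_eq_withDensity {Ω : Type*} [MeasureSpace Ω] [IsProbabilityMeasure (ℙ : Measure Ω)]
    (X : Ω → ℝ) (h : pdf X ℙ (volume : Measure ℝ) =ᵐ[(volume : Measure ℝ)] fden) :
    Measure.map X ℙ = volume.withDensity fden := by
  have hXm : AEMeasurable X ℙ := aemeas_of_pdf X h
  haveI : IsProbabilityMeasure (Measure.map X ℙ) := Measure.isProbabilityMeasure_map hXm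
  have hdec := (Measure.map X ℙ).haveLebesgueDecomposition_add volume
  rw [pdf_def] at h
  have hwd : volume.withDensity ((Measure.map X ℙ).rnDeriv volume) = volume.withDensity fden :=
    withDensity_congr_ae h
  have huniv : volume.withDensity fden Set.univ = 1 := by
    rw [withDensity_apply _ MeasurableSet.univ, Measure.restrict_univ, fden_lintegral]
  have hcancel : 1 + (Measure.map X ℙ).singularPart volume Set.univ = 1 + 0 := by
    rw [add_zero, add_comm]
    have h2 : (Measure.map X ℙ) Set.univ = ((Measure.map X ℙ).singularPart volume
        + volume.withDensity ((Measure.map X ℙ).rnDeriv volume)) Set.univ := by rw [← hdec]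
    rw [measure_univ, Measure.add_apply, hwd, huniv] at h2
    exact h2.symm
  have hs0 : (Measure.map X ℙ).singularPart volume = 0 := by
    refine Measure.measure_univ_eq_zero.mp ?_
    exact (ENNReal.cancel_of_ne ENNReal.one_ne_top).inj.mp hcancel
  calc Measure.map X ℙ = (Measure.map X ℙ).singularPart volume
      + volume.withDensity ((Measure.map X ℙ).rnDeriv volume) := hdec
    _ = volume.withDensity fden := by rw [hs0, hwd, zero_add]

lemma conv_measure :
    Measure.map (fun p : ℝ × ℝ => p.1 + p.2)
      ((volume.withDensity fden).prod (volume.withDensity fden)) =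
      volume.withDensity tden := by
  set μ := volume.withDensity fden with hμ
  haveI : IsProbabilityMeasure μ :=
    ⟨by rw [hμ, withDensity_apply _ MeasurableSet.univ, Measure.restrict_univ, fden_lintegral]⟩
  ext s hs
  rw [Measure.map_apply measurable_add hs, withDensity_apply _ hs]
  have hpre : MeasurableSet ((fun p : ℝ × ℝ => p.1 + p.2) ⁻¹' s) := hs.preimage measurable_add
  rw [Measure.prod_apply hpre]
  have inner : ∀ x : ℝ, μ (Prod.mk x ⁻¹' ((fun p : ℝ × ℝ => p.1 + p.2) ⁻¹' s))
      = ∫⁻ l in s, fden (l - x) := by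
    intro x
    have hBm : MeasurableSet ((fun y : ℝ => x + y) ⁻¹' s) := hs.preimage (measurable_const_add x)
    have hset : Prod.mk x ⁻¹' ((fun p : ℝ × ℝ => p.1 + p.2) ⁻¹' s) = (fun y => x + y) ⁻¹' s := rfl
    rw [hset, hμ, withDensity_apply _ hBm, ← lintegral_indicator hBm]
    have key : ∀ y : ℝ, ((fun y => x + y) ⁻¹' s).indicator fden y
        = s.indicator (fun l => fden (l - x)) (x + y) := by
      intro y
      by_cases hy : x + y ∈ s
      · simp [Set.indicator, hy, Set.mem_preimage, add_sub_cancel_left]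
      · simp [Set.indicator, hy, Set.mem_preimage]
    simp_rw [key]
    rw [lintegral_add_left_eq_self (fun l => s.indicator (fun l => fden (l - x)) l) x]
    rw [lintegral_indicator hs]
  simp_rw [inner]
  have hgmeas : Measurable fun x : ℝ => ∫⁻ l in s, fden (l - x) := by
    apply Measurable.lintegral_prod_right (f := fun x l => fden (l - x))
    exact fden_meas.comp (measurable_snd.sub measurable_fst)
  rw [hμ, lintegral_withDensity_eq_lintegral_mul volume fden_meas hgmeas]
  simp only [Pi.mul_apply]
  have hpull : ∀ x : ℝ, fden x * ∫⁻ l in s, fden (l - x)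
      = ∫⁻ l in s, fden x * fden (l - x) := by
    intro x
    exact (lintegral_const_mul' (fden x) _ ENNReal.ofReal_ne_top).symm
  simp_rw [hpull]
  rw [lintegral_lintegral_swap]
  · exact lintegral_congr fun l => conv_eq l
  · exact ((fden_meas.comp measurable_fst).mul
      (fden_meas.comp (measurable_snd.sub measurable_fst))).aemeasurable

theorem stmt_5 {Ω : Type*} [MeasureSpace Ω] [IsProbabilityMeasure (ℙ : Measure Ω)]
    (X Y : Ω → ℝ) (hXY : ProbabilityTheory.IndepFun X Y ℙ)
    (hX : pdf X ℙ volume =ᵐ[volume]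
      fun x => ENNReal.ofReal (if 0 < x then (2 / Real.pi) / (x ^ 2 + 1) else 0))
    (hY : pdf Y ℙ volume =ᵐ[volume]
      fun x => ENNReal.ofReal (if 0 < x then (2 / Real.pi) / (x ^ 2 + 1) else 0)) :
    pdf (fun ω => X ω + Y ω : Ω → ℝ) (ℙ : MeasureTheory.Measure Ω) (volume : MeasureTheory.Measure ℝ) =ᵐ[volume]
      fun l => ENNReal.ofReal (if 0 < l then
        (8 / Real.pi ^ 2) * (l * Real.arctan l + Real.log (l ^ 2 + 1)) / ((l ^ 2 + 4) * l)
        else 0) := by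
  have hXf : pdf X ℙ (volume : Measure ℝ) =ᵐ[(volume : Measure ℝ)] fden := hX
  have hYf : pdf Y ℙ (volume : Measure ℝ) =ᵐ[(volume : Measure ℝ)] fden := hY
  have hXm : AEMeasurable X ℙ := aemeas_of_pdf X hXf
  have hYm : AEMeasurable Y ℙ := aemeas_of_pdf Y hYf
  have hmX := map_eq_withDensity X hXf
  have hmY := map_eq_withDensity Y hYf
  have h1 : Measure.map (fun ω => (X ω, Y ω)) ℙ =
      (Measure.map X ℙ).prod (Measure.map Y ℙ) :=
    (indepFun_iff_map_prod_eq_prod_map_map hXm hYm).mp hXY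
  have hsum : Measure.map (fun ω => X ω + Y ω) ℙ = (volume : Measure ℝ).withDensity tden := by
    calc Measure.map (fun ω => X ω + Y ω) ℙ
        = Measure.map (fun p : ℝ × ℝ => p.1 + p.2) (Measure.map (fun ω => (X ω, Y ω)) ℙ) :=
          (AEMeasurable.map_map_of_aemeasurable measurable_add.aemeasurable (hXm.prodMk hYm)).symm
      _ = Measure.map (fun p : ℝ × ℝ => p.1 + p.2)
            ((volume.withDensity fden).prod (volume.withDensity fden)) := by
          rw [h1, hmX, hmY]
      _ = (volume : Measure ℝ).withDensity tden := conv_measure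
  have hfinal : pdf (fun ω => X ω + Y ω) ℙ (volume : Measure ℝ) =ᵐ[(volume : Measure ℝ)] tden := by
    rw [pdf_def, hsum]
    exact Measure.rnDeriv_withDensity volume tden_meas
  exact hfinal
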